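/- Let G be a group, τ an automorphism of G of finite order r, and (V, ρ) a finite-dimensional representation of G over a field k, viewed as a k[G]-module. Then the twisted exponent exp_τ(V) equals the least common multiple over g ∈ G of the orders of the linear operators ρ(N(g)), where N(g) = g·τ(g)·τ²(g)⋯τ^{r-1}(g). -/

import Mathlib

open scoped TensorProduct

noncomputable section

namespace TwistedExponent

variable (k H : Type*) [CommRing k] [Ring H] [HopfAlgebra k H]

/-- The convolution product of two linear endomorphisms of a bialgebra:
`f * g = μ ∘ (f ⊗ g) ∘ Δ`. -/
def conv (f g : H →ₗ[k] H) : H →ₗ[k] H :=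
  LinearMap.mul' k H ∘ₗ TensorProduct.map f g ∘ₗ Coalgebra.comul

/-- The convolution unit `η ∘ ε`, i.e. `h ↦ ε(h)·1`. -/
def convOne : H →ₗ[k] H := Algebra.linearMap k H ∘ₗ Coalgebra.counit

/-- `gamma T m` is the map `Γ_m = μ^m ∘ (Id ⊗ T ⊗ T² ⊗ ⋯ ⊗ T^{m-1}) ∘ Δ^{m-1}`, expressed as
the convolution product `Id * T * T² * ⋯ * T^{m-1}` (with `gamma T 0` the convolution unit). -/
def gamma (T : H →ₗ[k] H) : ℕ → (H →ₗ[k] H)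
  | 0 => convOne k H
  | (m + 1) => conv k H (gamma T m) (T ^ m)

/-- The inverse of the antipode, given that the antipode is bijective. -/
def antipodeInv (hS : Function.Bijective (HopfAlgebra.antipode (R := k) (A := H))) :
    H →ₗ[k] H :=
  (LinearEquiv.ofBijective (HopfAlgebra.antipode (R := k) (A := H)) hS).symm

/-- The map `S⁻² ∘ τ`. -/
def twist (hS : Function.Bijective (HopfAlgebra.antipode (R := k) (A := H)))
    (τ : H →ₗ[k] H) : H →ₗ[k] H :=
  antipodeInv k H hS ∘ₗ antipodeInv k H hS ∘ₗ τ

/-- `f : H → H` has exact (finite) order `r`. -/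
def HasOrder (τ : H → H) (r : ℕ) : Prop :=
  0 < r ∧ τ^[r] = id ∧ ∀ s : ℕ, 0 < s → s < r → τ^[s] ≠ id

end TwistedExponent

open TwistedExponent

namespace TwistedExponent

/-- The norm of `g ∈ G` with respect to `τ`: `N(g) = g·τ(g)·τ²(g)⋯τ^{r-1}(g)`. -/
def normG {G : Type*} [Monoid G] (τ : G → G) (r : ℕ) (g : G) : G :=
  ((List.range r).map (fun i => τ^[i] g)).prod

/-- `f : G → G` has exact (finite) order `r`. -/
def HasOrderG {G : Type*} (τ : G → G) (r : ℕ) : Prop :=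
  0 < r ∧ τ^[r] = id ∧ ∀ s : ℕ, 0 < s → s < r → τ^[s] ≠ id

/-- The map `Γ_m` acts on the `H`-module `V` as `ε·Id_V`. -/
def GammaTrivOn {k H : Type*} [CommRing k] [Ring H] [HopfAlgebra k H] (T : H →ₗ[k] H) (m : ℕ)
    (V : Type*) [AddCommGroup V] [Module k V] [Module H V] [IsScalarTower k H V] : Prop :=
  ∀ (h : H) (v : V), gamma k H T m h • v = Coalgebra.counit (R := k) h • v

end TwistedExponent

namespace TwistedExponent

variable {k H : Type*} [CommRing k] [Ring H] [HopfAlgebra k H]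

/-- Action on a fixed vector as a linear map in the algebra variable. -/
def actOn (V : Type*) [AddCommGroup V] [Module k V] [Module H V] [IsScalarTower k H V]
    (v : V) : H →ₗ[k] V where
  toFun h := h • v
  map_add' x y := add_smul x y v
  map_smul' c x := smul_assoc c x v

@[simp] lemma actOn_apply {V : Type*} [AddCommGroup V] [Module k V] [Module H V]
    [IsScalarTower k H V] (v : V) (h : H) : actOn (k := k) V v h = h • v := rfl

lemma conv_apply_grouplike (f g : H →ₗ[k] H) (x : H)
    (hx : Coalgebra.comul (R := k) x = x ⊗ₜ[k] x) :
    conv k H f g x = f x * g x := by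
  simp [conv, hx]

lemma antipode_grouplike {G : Type*} [Group G] (ι : G →* H)
    (hgl₁ : ∀ g : G, Coalgebra.comul (R := k) (ι g) = ι g ⊗ₜ[k] ι g)
    (hgl₂ : ∀ g : G, Coalgebra.counit (R := k) (ι g) = 1) (g : G) :
    HopfAlgebra.antipode (R := k) (ι g) = ι g⁻¹ := by
  have h1 : HopfAlgebra.antipode (R := k) (ι g) * ι g = 1 := by
    have := HopfAlgebra.mul_antipode_rTensor_comul_apply (R := k) (ι g)
    rw [hgl₁, hgl₂] at this
    simpa using this
  have h2 : ι g * ι g⁻¹ = 1 := by rw [← map_mul, mul_inv_cancel, map_one]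
  calc HopfAlgebra.antipode (R := k) (ι g)
      = HopfAlgebra.antipode (R := k) (ι g) * (ι g * ι g⁻¹) := by rw [h2, mul_one]
    _ = (HopfAlgebra.antipode (R := k) (ι g) * ι g) * ι g⁻¹ := by rw [mul_assoc]
    _ = ι g⁻¹ := by rw [h1, one_mul]

lemma antipodeInv_grouplike {G : Type*} [Group G]
    (hS : Function.Bijective (HopfAlgebra.antipode (R := k) (A := H))) (ι : G →* H)
    (hgl₁ : ∀ g : G, Coalgebra.comul (R := k) (ι g) = ι g ⊗ₜ[k] ι g)
    (hgl₂ : ∀ g : G, Coalgebra.counit (R := k) (ι g) = 1) (g : G) :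
    antipodeInv k H hS (ι g) = ι g⁻¹ := by
  apply hS.injective
  have h1 : HopfAlgebra.antipode (R := k) (antipodeInv k H hS (ι g)) = ι g :=
    (LinearEquiv.ofBijective _ hS).apply_symm_apply (ι g)
  rw [h1, antipode_grouplike ι hgl₁ hgl₂, inv_inv]

end TwistedExponent

/-- Let `G` be a group, `τ` an automorphism of `G` of finite order `r`, and
`(V, ρ)` a finite-dimensional representation of `G` over a field `k`, viewed as a module over
the group algebra `k[G]` (encoded as a Hopf algebra `H` with a monoid homomorphism `ι : G →* H`
whose values are group-like and form a `k`-basis, `τH` being the linear extension of `τ`).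
Then `exp_τ(V)` equals the least common multiple over `g ∈ G` of the orders of the linear
operators `ρ(N(g))`, where `N(g) = g·τ(g)⋯τ^{r-1}(g)`: the least positive `n` with
`ρ(Γ^τ_{nr}(h)) = ε(h)·Id_V` for all `h` is exactly the least positive `n` with
`ρ(N(g))^n = Id_V` for all `g ∈ G` (both possibly nonexistent). -/
theorem stmt2 {k G H : Type*} [Field k] [Group G] [Ring H] [HopfAlgebra k H]
    (hS : Function.Bijective (HopfAlgebra.antipode (R := k) (A := H)))
    (ι : G →* H) (b : Module.Basis G k H) (hb : ∀ g : G, b g = ι g)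
    (hgl₁ : ∀ g : G, Coalgebra.comul (R := k) (ι g) = ι g ⊗ₜ[k] ι g)
    (hgl₂ : ∀ g : G, Coalgebra.counit (R := k) (ι g) = 1)
    (τ : G ≃* G) (r : ℕ) (hr : HasOrderG (⇑τ) r)
    (τH : H ≃ₐc[k] H) (hτH : ∀ g : G, τH (ι g) = ι (τ g))
    (V : Type*) [AddCommGroup V] [Module k V] [Module H V] [IsScalarTower k H V]
    [FiniteDimensional k V] :
    ∀ e : ℕ,
      IsLeast {n : ℕ | 0 < n ∧
        GammaTrivOn (twist k H hS (τH : H →ₗ[k] H)) (n * r) V} e ↔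
      IsLeast {n : ℕ | 0 < n ∧ ∀ (g : G) (v : V), ι (normG (⇑τ) r g) ^ n • v = v} e := by
  set T : H →ₗ[k] H := twist k H hS (τH : H →ₗ[k] H) with hT
  -- twist fixes group-like values up to τ
  have htw : ∀ g : G, T (ι g) = ι (τ g) := by
    intro g
    show antipodeInv k H hS (antipodeInv k H hS (τH (ι g))) = ι (τ g)
    rw [hτH, antipodeInv_grouplike hS ι hgl₁ hgl₂,
      antipodeInv_grouplike hS ι hgl₁ hgl₂, inv_inv]
  have htwpow : ∀ (m : ℕ) (g : G), (T ^ m) (ι g) = ι ((⇑τ)^[m] g) := by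
    intro m
    induction m with
    | zero => intro g; simp
    | succ m ih =>
      intro g
      rw [pow_succ, Module.End.mul_apply, htw, ih, Function.iterate_succ_apply]
  -- gamma on group-like values
  have hgamma : ∀ (m : ℕ) (g : G),
      gamma k H T m (ι g) = ι (((List.range m).map (fun i => (⇑τ)^[i] g)).prod) := by
    intro m
    induction m with
    | zero =>
      intro g
      show convOne k H (ι g) = _
      simp [convOne, hgl₂]
    | succ m ih =>
      intro g
      show conv k H (gamma k H T m) (T ^ m) (ι g) = _
      rw [conv_apply_grouplike _ _ _ (hgl₁ g), ih, htwpow, ← map_mul,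
        List.range_succ, List.map_append, List.prod_append]
      simp
  -- the product over n*r is the n-th power of the norm
  have hτr : (⇑τ)^[r] = id := hr.2.1
  have hprod : ∀ (n : ℕ) (g : G),
      ((List.range (n * r)).map (fun i => (⇑τ)^[i] g)).prod = normG (⇑τ) r g ^ n := by
    intro n g
    induction n with
    | zero => simp
    | succ n ih =>
      have hnr : (⇑τ)^[n * r] = id := by
        rw [mul_comm, Function.iterate_mul, hτr, Function.iterate_id]
      rw [Nat.succ_mul, List.range_add, List.map_append, List.prod_append, ih,
        pow_succ, normG]
      congr 1
      rw [List.map_map]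
      congr 1
      refine List.map_congr_left fun i _ => ?_
      simp only [Function.comp_apply]
      rw [Nat.add_comm, Function.iterate_add_apply, hnr, id_eq]
  -- key equivalence between the two conditions
  have hkey : ∀ n : ℕ, GammaTrivOn T (n * r) V ↔
      ∀ (g : G) (v : V), ι (normG (⇑τ) r g) ^ n • v = v := by
    intro n
    constructor
    · intro hG g v
      have := hG (ι g) v
      rw [hgamma, hprod, hgl₂, map_pow] at this
      simpa using this
    · intro hN h v
      have heq : (actOn (k := k) V v ∘ₗ gamma k H T (n * r)) =
          (LinearMap.toSpanSingleton k V v ∘ₗ Coalgebra.counit (R := k)) := by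
        apply b.ext
        intro g
        rw [hb]
        simp only [LinearMap.comp_apply, actOn_apply, hgamma, hprod, hgl₂,
          LinearMap.toSpanSingleton_apply, map_pow]
        rw [hN g v, one_smul]
      have := LinearMap.congr_fun heq h
      simpa using this
  intro e
  have hset : {n : ℕ | 0 < n ∧ GammaTrivOn T (n * r) V} =
      {n : ℕ | 0 < n ∧ ∀ (g : G) (v : V), ι (normG (⇑τ) r g) ^ n • v = v} := by
    ext n
    exact and_congr_right fun _ => hkey n
  rw [hset]
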